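/- For all real x > 0 and real constant c, the inequality (1 - exp(-c*x))/(1 + exp(-c*x)) < x holds for all x > 0 if and only if c ≤ 2. -/

import Mathlib

open Real

lemma keyB : ∀ s : ℝ, 0 < s → 2 - s < (2 + s) * Real.exp (-s) := by
  have hg : ∀ s : ℝ, HasDerivAt (fun s : ℝ => (2 + s) * Real.exp (-s) - (2 - s))
      (1 - (1 + s) * Real.exp (-s)) s := by
    intro s
    have h1 : HasDerivAt (fun s : ℝ => Real.exp (-s)) (-Real.exp (-s)) s := by
      simpa [Function.comp_def] using (Real.hasDerivAt_exp (-s)).comp s (hasDerivAt_neg s)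
    have h2 : HasDerivAt (fun s : ℝ => (2 + s) * Real.exp (-s))
        (1 * Real.exp (-s) + (2 + s) * (-Real.exp (-s))) s := by
      simpa [Pi.add_def, Pi.mul_def] using ((hasDerivAt_const s (2:ℝ)).add (hasDerivAt_id s)).mul h1
    have h3 : HasDerivAt (fun s : ℝ => (2 : ℝ) - s) (-1) s := by
      simpa [Pi.sub_def] using (hasDerivAt_const s (2:ℝ)).sub (hasDerivAt_id s)
    have := h2.fun_sub h3
    refine this.congr_deriv ?_
    ring
  have hmono : StrictMonoOn (fun s : ℝ => (2 + s) * Real.exp (-s) - (2 - s)) (Set.Ici 0) := by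
    apply strictMonoOn_of_deriv_pos (convex_Ici 0)
    · exact (Continuous.sub ((continuous_const.add continuous_id).mul
        (Real.continuous_exp.comp continuous_neg)) (continuous_const.sub continuous_id)).continuousOn
    · intro s hs
      rw [interior_Ici] at hs
      rw [(hg s).deriv]
      have h := Real.add_one_lt_exp (x := s) (by linarith [hs.out] : s ≠ 0)
      have he : 0 < Real.exp (-s) := Real.exp_pos _
      have : (1 + s) * Real.exp (-s) < 1 := by
        rw [Real.exp_neg]
        rw [mul_inv_lt_iff₀ (Real.exp_pos s)]
        linarith
      linarith
  intro s hs
  have := hmono (Set.self_mem_Ici) (Set.mem_Ici.2 hs.le) hs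
  simp at this
  linarith

theorem stmt0 (c : ℝ) :
    (∀ x : ℝ, 0 < x →
      (1 - Real.exp (-(c * x))) / (1 + Real.exp (-(c * x))) < x) ↔ c ≤ 2 := by
  constructor
  · intro h
    by_contra hc
    push_neg at hc
    -- derivative of F at 0 is c/2 > 1, contradiction
    set F : ℝ → ℝ := fun x => (1 - Real.exp (-(c * x))) / (1 + Real.exp (-(c * x))) with hF
    have hd : HasDerivAt F (c / 2) 0 := by
      have h1 : HasDerivAt (fun x : ℝ => Real.exp (-(c * x))) (-c * Real.exp (-(c * 0))) 0 := by
        have := (Real.hasDerivAt_exp (-(c * 0))).comp 0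
          (((hasDerivAt_id (0:ℝ)).const_mul c).neg)
        simpa [mul_comm, Function.comp_def, Pi.neg_def] using this
      have hnum : HasDerivAt (fun x : ℝ => 1 - Real.exp (-(c * x)))
          (-(-c * Real.exp (-(c * 0)))) 0 := by
        simpa [Pi.sub_def] using (hasDerivAt_const 0 (1:ℝ)).sub h1
      have hden : HasDerivAt (fun x : ℝ => 1 + Real.exp (-(c * x)))
          (-c * Real.exp (-(c * 0))) 0 := by
        simpa [Pi.add_def] using (hasDerivAt_const 0 (1:ℝ)).add h1
      have hne : (1 : ℝ) + Real.exp (-(c * 0)) ≠ 0 := by positivity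
      have := hnum.fun_div hden hne
      refine this.congr_deriv ?_
      simp
      ring
    have hslope : Filter.Tendsto (fun x => F x / x) (nhdsWithin 0 (Set.Ioi 0)) (nhds (c/2)) := by
      have := hasDerivAt_iff_tendsto_slope.mp hd
      have h2 := this.mono_left (nhdsWithin_mono 0 (by
        intro x hx
        exact ne_of_gt hx : Set.Ioi (0:ℝ) ⊆ {0}ᶜ))
      have : (fun x => F x / x) =ᶠ[nhdsWithin 0 (Set.Ioi 0)] slope F 0 := by
        filter_upwards [self_mem_nhdsWithin] with x hx
        simp [slope_def_field, hF, div_eq_div_iff]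
      exact Filter.Tendsto.congr' this.symm h2
    have hle : c / 2 ≤ 1 := by
      apply le_of_tendsto hslope
      filter_upwards [self_mem_nhdsWithin] with x hx
      have hx0 : 0 < x := hx
      exact le_of_lt ((div_lt_one hx0).2 (h x hx0))
    linarith
  · intro hc x hx
    have he : 0 < Real.exp (-(c * x)) := Real.exp_pos _
    rw [div_lt_iff₀ (by linarith)]
    rcases le_or_gt c 0 with h0 | h0
    · have : 1 ≤ Real.exp (-(c * x)) := by
        rw [Real.one_le_exp_iff]
        nlinarith
      nlinarith
    · have hs : 0 < c * x := mul_pos h0 hx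
      have := keyB (c * x) hs
      nlinarith [mul_le_mul_of_nonneg_left hc hx.le]
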